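/- Let p and q be distinct primes, let N = p·q, and assume N is coprime to φ(N). Then for every unit c of the ring ZMod (N^2) there exist a natural number m < N and a unit r of ZMod (N^2) such that c = (1+N)^m · r^N in ZMod (N^2). -/

import Mathlib

lemma paillier_one_add_pow (N : ℕ) (k : ℕ) :
    ((1 : ZMod (N^2)) + (N : ZMod (N^2)))^k = 1 + (k : ZMod (N^2)) * N := by
  have hNN : (N : ZMod (N^2)) * N = 0 := by
    have h : ((N^2 : ℕ) : ZMod (N^2)) = 0 := ZMod.natCast_self _
    push_cast at h
    linear_combination h
  induction k with
  | zero => simp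
  | succ k ih =>
    simp only [pow_succ]
    rw [ih]
    push_cast
    linear_combination (k : ZMod (N^2)) * hNN

theorem paillier_enc_surjective (p q : ℕ) (hp : p.Prime) (hq : q.Prime) (hpq : p ≠ q)
    (N : ℕ) (hN : N = p * q) (hco : Nat.Coprime N (Nat.totient N))
    (c : (ZMod (N ^ 2))ˣ) :
    ∃ m : ℕ, m < N ∧ ∃ r : (ZMod (N ^ 2))ˣ,
      (c : ZMod (N ^ 2))
        = ((1 : ZMod (N ^ 2)) + (N : ZMod (N ^ 2))) ^ m * (r : ZMod (N ^ 2)) ^ N := by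
  have hN1 : 1 < N := by
    subst hN
    exact Nat.one_lt_mul_iff.mpr ⟨hp.pos, hq.pos, Or.inl hp.one_lt⟩
  haveI : NeZero N := ⟨by omega⟩
  haveI : NeZero (N ^ 2) := ⟨pow_ne_zero 2 (by omega)⟩
  obtain ⟨b, -, hb⟩ := Nat.exists_mul_mod_eq_one_of_coprime (Nat.Coprime.symm hco) hN1
  obtain ⟨t, hbt⟩ : ∃ t, N.totient * b = N * t + 1 := by
    refine ⟨N.totient * b / N, ?_⟩
    have := Nat.div_add_mod (N.totient * b) N
    omega
  have hdvd : N ∣ N ^ 2 := dvd_pow_self N (by norm_num)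
  set π : ZMod (N ^ 2) →+* ZMod N := ZMod.castHom hdvd (ZMod N) with hπ
  have hπu : π ((c ^ N.totient : (ZMod (N ^ 2))ˣ) : ZMod (N ^ 2)) = 1 := by
    have h1 : (Units.map π.toMonoidHom c) ^ N.totient = 1 := ZMod.pow_totient _
    rw [Units.val_pow_eq_pow_val, map_pow]
    calc (π (c : ZMod (N ^ 2))) ^ N.totient
        = (((Units.map π.toMonoidHom c) ^ N.totient : (ZMod N)ˣ) : ZMod N) := by
          rw [Units.val_pow_eq_pow_val]; rfl
      _ = 1 := by rw [h1]; rfl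
  set v : ℕ := ((c ^ N.totient : (ZMod (N ^ 2))ˣ) : ZMod (N ^ 2)).val with hv
  have h2 : ((v : ℕ) : ZMod N) = 1 := by
    rw [hv, ZMod.natCast_val, ← ZMod.castHom_apply (h := hdvd), ← hπ, hπu]
  obtain ⟨k, hvk⟩ : ∃ k, v = N * k + 1 := by
    have h3 : v % N = 1 % N := (ZMod.natCast_eq_natCast_iff _ _ _).mp
      (by rw [h2, Nat.cast_one])
    have h3' : v % N = 1 := h3.trans (Nat.mod_eq_of_lt hN1)
    refine ⟨v / N, ?_⟩
    conv_lhs => rw [← Nat.div_add_mod v N]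
    rw [h3']
  have hupow : ((c ^ N.totient : (ZMod (N ^ 2))ˣ) : ZMod (N ^ 2))
      = ((1 : ZMod (N ^ 2)) + N) ^ k := by
    rw [paillier_one_add_pow]
    have : ((v : ℕ) : ZMod (N ^ 2)) = ((c ^ N.totient : (ZMod (N ^ 2))ˣ) : ZMod (N ^ 2)) := by
      rw [hv, ZMod.natCast_val, ZMod.cast_id]
    rw [← this, hvk]
    push_cast
    ring
  have hord : ((1 : ZMod (N ^ 2)) + (N : ZMod (N ^ 2))) ^ N = 1 := by
    rw [paillier_one_add_pow]
    have h : ((N ^ 2 : ℕ) : ZMod (N ^ 2)) = 0 := ZMod.natCast_self _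
    push_cast at h
    linear_combination h
  have hsplit : (c : ZMod (N ^ 2)) ^ (N.totient * b)
      = ((1 : ZMod (N ^ 2)) + N) ^ ((k * b) % N) := by
    calc (c : ZMod (N ^ 2)) ^ (N.totient * b)
        = ((c ^ N.totient : (ZMod (N ^ 2))ˣ) : ZMod (N ^ 2)) ^ b := by
          push_cast; rw [← pow_mul]
      _ = ((1 : ZMod (N ^ 2)) + N) ^ (k * b) := by rw [hupow, ← pow_mul]
      _ = ((1 : ZMod (N ^ 2)) + N) ^ (N * (k * b / N) + k * b % N) := by
          rw [Nat.div_add_mod]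
      _ = ((1 : ZMod (N ^ 2)) + N) ^ (k * b % N) := by
          rw [pow_add, pow_mul, hord, one_pow, one_mul]
  refine ⟨(k * b) % N, Nat.mod_lt _ (by omega), (c ^ t)⁻¹, ?_⟩
  have hmain : (c : ZMod (N ^ 2))
      = (c : ZMod (N ^ 2)) ^ (N.totient * b)
        * (((c ^ t)⁻¹ : (ZMod (N ^ 2))ˣ) : ZMod (N ^ 2)) ^ N := by
    have h : c = c ^ (N.totient * b) * ((c ^ t)⁻¹) ^ N := by
      rw [hbt]
      group
    have := congrArg Units.val h
    push_cast at this
    exact this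
  rw [hsplit] at hmain
  exact hmain
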